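/- Let p be a prime with p ≡ 3 (mod 4), and let ℤ[i] be the ring of Gaussian integers with complex conjugation a ↦ ā. Then the set S of 2×2 matrices (a b; c d) with entries in ℤ[i] satisfying p ∣ c and p ∣ (a − d̄) is a subring of the matrix ring M₂(ℤ[i]), and as an additive subgroup of M₂(ℤ[i]) it has index p⁴ (the additive quotient group M₂(ℤ[i])/S has exactly p⁴ elements). -/

import Mathlib

/-- Let `p ≡ 3 (mod 4)` be a prime and `ℤ[i]` the Gaussian integers with conjugation
`star`.  The set of matrices `(a b; c d)` over `ℤ[i]` with `p ∣ c` and `p ∣ (a - d̄)` is a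
subring of `M₂(ℤ[i])` of additive index `p⁴`. -/
theorem stmt_14 (p : ℕ) (hp : p.Prime) (hmod : p % 4 = 3) :
    ∃ S : Subring (Matrix (Fin 2) (Fin 2) GaussianInt),
      (∀ A : Matrix (Fin 2) (Fin 2) GaussianInt,
        A ∈ S ↔ ((p : GaussianInt) ∣ A 1 0 ∧
          (p : GaussianInt) ∣ (A 0 0 - star (A 1 1)))) ∧
      S.toAddSubgroup.index = p ^ 4 := by
  haveI : NeZero p := ⟨hp.pos.ne'⟩
  set q : GaussianInt := (p : GaussianInt) with hq
  let S : Subring (Matrix (Fin 2) (Fin 2) GaussianInt) := {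
    carrier := {A | q ∣ A 1 0 ∧ q ∣ (A 0 0 - star (A 1 1))}
    zero_mem' := by simp
    one_mem' := by simp [Matrix.one_apply]
    add_mem' := by
      rintro A B ⟨hA1, hA2⟩ ⟨hB1, hB2⟩
      constructor
      · simpa using dvd_add hA1 hB1
      · have := dvd_add hA2 hB2
        simp only [Matrix.add_apply, star_add]
        convert this using 1; ring
    neg_mem' := by
      rintro A ⟨h1, h2⟩
      constructor
      · simpa using h1.neg_right
      · simp only [Matrix.neg_apply, star_neg]
        convert h2.neg_right using 1; ring
    mul_mem' := by
      rintro A B ⟨hA1, hA2⟩ ⟨hB1, hB2⟩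
      have hmul : ∀ M N : Matrix (Fin 2) (Fin 2) GaussianInt, ∀ i j,
          (M * N) i j = M i 0 * N 0 j + M i 1 * N 1 j := by
        intro M N i j
        simp [Matrix.mul_apply, Fin.sum_univ_two]
      constructor
      · rw [hmul]
        exact dvd_add (hA1.mul_right _) (hB1.mul_left _)
      · rw [hmul, hmul]
        have e1 : q ∣ star (A 1 0) := by
          obtain ⟨c, hc⟩ := hA1
          exact ⟨star c, by rw [hc, star_mul', mul_comm]; simp [hq, mul_comm]⟩
        have key : A 0 0 * B 0 0 + A 0 1 * B 1 0 -
            star (A 1 0 * B 0 1 + A 1 1 * B 1 1) =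
            (A 0 0 - star (A 1 1)) * B 0 0 +
            star (A 1 1) * (B 0 0 - star (B 1 1)) +
            A 0 1 * B 1 0 - star (A 1 0) * star (B 0 1) := by
          simp only [star_add, star_mul']; ring
        rw [key]
        exact dvd_sub (dvd_add (dvd_add (hA2.mul_right _) (hB2.mul_left _))
          (hB1.mul_left _)) (e1.mul_right _) }
  refine ⟨S, fun A => Iff.rfl, ?_⟩
  classical
  let f : Matrix (Fin 2) (Fin 2) GaussianInt →+
      (ZMod p × ZMod p) × (ZMod p × ZMod p) :=
    { toFun := fun A => ((((A 1 0).re : ZMod p), ((A 1 0).im : ZMod p)),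
        (((A 0 0 - star (A 1 1)).re : ZMod p), ((A 0 0 - star (A 1 1)).im : ZMod p)))
      map_zero' := by simp
      map_add' := by
        intro A B
        simp only [Matrix.add_apply, star_add, Prod.mk_add_mk, Prod.ext_iff, Prod.mk.injEq]
        refine ⟨⟨?_, ?_⟩, ?_, ?_⟩ <;>
          simp only [sub_eq_add_neg, Zsqrtd.re_add, Zsqrtd.im_add, Zsqrtd.re_neg,
            Zsqrtd.im_neg, Zsqrtd.re_star, Zsqrtd.im_star] <;> push_cast <;> ring }
  have hdvd : ∀ x : GaussianInt, q ∣ x ↔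
      ((x.re : ZMod p) = 0 ∧ (x.im : ZMod p) = 0) := by
    intro x
    rw [hq, show ((p : ℕ) : GaussianInt) = ((p : ℤ) : GaussianInt) by push_cast; rfl,
      Zsqrtd.intCast_dvd, ZMod.intCast_zmod_eq_zero_iff_dvd,
      ZMod.intCast_zmod_eq_zero_iff_dvd]
  have hker : ∀ A, f A = 0 ↔ (q ∣ A 1 0 ∧ q ∣ (A 0 0 - star (A 1 1))) := by
    intro A
    rw [hdvd, hdvd]
    simp only [f, AddMonoidHom.coe_mk, ZeroHom.coe_mk, Prod.ext_iff, Prod.mk.injEq,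
      Prod.fst_zero, Prod.snd_zero]
  have hsurj : Function.Surjective f := by
    rintro ⟨⟨a, b⟩, ⟨c, d⟩⟩
    refine ⟨Matrix.of ![![⟨c.val, d.val⟩, 0], ![⟨a.val, b.val⟩, 0]], ?_⟩
    simp [f, Prod.ext_iff, Zsqrtd.re_star, Zsqrtd.im_star, ZMod.natCast_val, ZMod.cast_id]
  have hSA : S.toAddSubgroup = f.ker := by
    ext A
    simp only [Subring.mem_toAddSubgroup, AddMonoidHom.mem_ker, hker]
    rfl
  rw [hSA, AddSubgroup.index_ker, AddMonoidHom.range_eq_top_of_surjective f hsurj]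
  rw [Nat.card_congr AddSubgroup.topEquiv.toEquiv]
  simp [Nat.card_prod, Nat.card_zmod]
  ring
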